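/- arXiv:quant-ph/0502165 — 5 statements merged into one kernel-verified Lean document; each statement's English description precedes it below -/
import Mathlib

section
/- Let ρ0 and ρ1 be two n×n complex density matrices with a priori probabilities η0, η1 ≥ 0, η0 + η1 = 1, and let (E0, E1, E?) be a USD POVM for (ρ0, ρ1). Then the partial failure probabilities Q0 = η0·Tr(E? ρ0) and Q1 = η1·Tr(E? ρ1) satisfy Q0·Q1 ≥ η0·η1·F², where F = Tr(√(√ρ0 · ρ1 · √ρ0)) is the fidelity of ρ0 and ρ1. -/
open Matrix
open scoped ComplexOrder

/-- The positive semidefinite square root of a matrix (zero if the matrix is not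
positive semidefinite). -/
noncomputable def msqrt {n : ℕ} (A : Matrix (Fin n) (Fin n) ℂ) : Matrix (Fin n) (Fin n) ℂ :=
  open scoped Classical in
  if h : A.PosSemidef then
    (h.1.eigenvectorUnitary : Matrix (Fin n) (Fin n) ℂ) *
      diagonal ((↑) ∘ Real.sqrt ∘ h.1.eigenvalues) *
      (star h.1.eigenvectorUnitary : Matrix (Fin n) (Fin n) ℂ) else 0

lemma usd_trace_re_nonneg {n : ℕ} {A : Matrix (Fin n) (Fin n) ℂ} (hA : A.PosSemidef) :
    0 ≤ A.trace.re := by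
  have h : ∀ i, 0 ≤ A i i := fun i => hA.diag_nonneg
  simp only [Matrix.trace, Matrix.diag, Complex.re_sum]
  exact Finset.sum_nonneg fun i _ => (Complex.nonneg_iff.mp (h i)).1

lemma usd_eq_zero_of_trace {n : ℕ} {A : Matrix (Fin n) (Fin n) ℂ}
    (h : (Aᴴ * A).trace = 0) : A = 0 := by
  have key : (Aᴴ * A).trace = ((∑ j, ∑ i, Complex.normSq (A i j) : ℝ) : ℂ) := by
    simp only [Matrix.trace, Matrix.diag, Matrix.mul_apply, conjTranspose_apply]
    push_cast
    refine Finset.sum_congr rfl fun j _ => Finset.sum_congr rfl fun i _ => ?_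
    rw [Complex.normSq_eq_conj_mul_self]
    rfl
  rw [key, Complex.ofReal_eq_zero] at h
  have hz : ∀ j ∈ Finset.univ, ∀ i ∈ (Finset.univ : Finset (Fin n)),
      Complex.normSq (A i j) = 0 := by
    intro j _
    have hj := (Finset.sum_eq_zero_iff_of_nonneg (fun j _ =>
      Finset.sum_nonneg fun i _ => Complex.normSq_nonneg _)).mp h j (Finset.mem_univ j)
    exact fun i _ => (Finset.sum_eq_zero_iff_of_nonneg
      (fun i _ => Complex.normSq_nonneg _)).mp hj i (Finset.mem_univ i)
  ext i j
  simpa using Complex.normSq_eq_zero.mp (hz j (Finset.mem_univ j) i (Finset.mem_univ i))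

lemma usd_cs {n : ℕ} (X Y : Matrix (Fin n) (Fin n) ℂ) :
    ‖(Xᴴ * Y).trace‖ ^ 2 ≤ (Xᴴ * X).trace.re * (Yᴴ * Y).trace.re := by
  let x : EuclideanSpace ℂ (Fin n × Fin n) := WithLp.toLp 2 (fun p : Fin n × Fin n => X p.1 p.2)
  let y : EuclideanSpace ℂ (Fin n × Fin n) := WithLp.toLp 2 (fun p : Fin n × Fin n => Y p.1 p.2)
  have key : ∀ Z W : Matrix (Fin n) (Fin n) ℂ,
      (Zᴴ * W).trace = ∑ p : Fin n × Fin n, (starRingEnd ℂ) (Z p.1 p.2) * W p.1 p.2 := by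
    intro Z W
    rw [Fintype.sum_prod_type]
    simp only [Matrix.trace, Matrix.diag, Matrix.mul_apply, conjTranspose_apply,
      RCLike.star_def]
    exact Finset.sum_comm
  have h1 : (Xᴴ * Y).trace = inner ℂ x y := by
    rw [key]; simp [PiLp.inner_apply, x, y]; exact Finset.sum_congr rfl fun _ _ => by ring
  have h2 : (Xᴴ * X).trace = inner ℂ x x := by
    rw [key]; simp [PiLp.inner_apply, x, -inner_self_eq_norm_sq_to_K]; exact Finset.sum_congr rfl fun _ _ => by ring
  have h3 : (Yᴴ * Y).trace = inner ℂ y y := by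
    rw [key]; simp [PiLp.inner_apply, y, -inner_self_eq_norm_sq_to_K]; exact Finset.sum_congr rfl fun _ _ => by ring
  have hx : (Xᴴ * X).trace.re = ‖x‖ ^ 2 := by
    rw [h2, inner_self_eq_norm_sq_to_K]; norm_cast
  have hy : (Yᴴ * Y).trace.re = ‖y‖ ^ 2 := by
    rw [h3, inner_self_eq_norm_sq_to_K]; norm_cast
  rw [h1, hx, hy]
  calc ‖(inner ℂ x y : ℂ)‖ ^ 2 ≤ (‖x‖ * ‖y‖) ^ 2 := by
        exact pow_le_pow_left₀ (norm_nonneg _) (norm_inner_le_norm (𝕜 := ℂ) x y) 2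
    _ = ‖x‖ ^ 2 * ‖y‖ ^ 2 := by ring

noncomputable def Matrix.PosSemidef.sqrt {n : ℕ} {A : Matrix (Fin n) (Fin n) ℂ}
    (h : A.PosSemidef) : Matrix (Fin n) (Fin n) ℂ :=
  (h.1.eigenvectorUnitary : Matrix (Fin n) (Fin n) ℂ) *
    diagonal ((↑) ∘ Real.sqrt ∘ h.1.eigenvalues) *
    (star h.1.eigenvectorUnitary : Matrix (Fin n) (Fin n) ℂ)

lemma Matrix.PosSemidef.posSemidef_sqrt {n : ℕ} {A : Matrix (Fin n) (Fin n) ℂ}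
    (h : A.PosSemidef) : h.sqrt.PosSemidef := by
  unfold Matrix.PosSemidef.sqrt
  have hs : (star h.1.eigenvectorUnitary : Matrix (Fin n) (Fin n) ℂ)
      = (h.1.eigenvectorUnitary : Matrix (Fin n) (Fin n) ℂ)ᴴ := rfl
  rw [hs]
  refine Matrix.PosSemidef.mul_mul_conjTranspose_same ?_ _
  refine posSemidef_diagonal_iff.mpr fun i => ?_
  simpa using Complex.zero_le_real.mpr (Real.sqrt_nonneg (h.1.eigenvalues i))

lemma Matrix.PosSemidef.sqrt_mul_self {n : ℕ} {A : Matrix (Fin n) (Fin n) ℂ}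
    (h : A.PosSemidef) : h.sqrt * h.sqrt = A := by
  unfold Matrix.PosSemidef.sqrt
  set U : Matrix (Fin n) (Fin n) ℂ := (h.1.eigenvectorUnitary : Matrix (Fin n) (Fin n) ℂ)
  have hsU : (star h.1.eigenvectorUnitary : Matrix (Fin n) (Fin n) ℂ) = star U := rfl
  have hUU : star U * U = 1 := Matrix.mem_unitaryGroup_iff'.mp (h.1.eigenvectorUnitary).2
  have hA := h.1.spectral_theorem
  rw [Unitary.conjStarAlgAut_apply] at hA
  conv_rhs => rw [hA]
  rw [hsU]
  calc U * diagonal ((↑) ∘ Real.sqrt ∘ h.1.eigenvalues) * star U *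
        (U * diagonal ((↑) ∘ Real.sqrt ∘ h.1.eigenvalues) * star U)
      = U * (diagonal ((↑) ∘ Real.sqrt ∘ h.1.eigenvalues) * (star U * U) *
        diagonal ((↑) ∘ Real.sqrt ∘ h.1.eigenvalues)) * star U := by noncomm_ring
    _ = _ := by
      rw [hUU, mul_one, diagonal_mul_diagonal]
      congr 3
      funext i
      simp only [Function.comp_apply]
      rw [← Complex.ofReal_mul, Real.mul_self_sqrt (h.eigenvalues_nonneg i)]
      rfl

/-- PSD `B`, `A` and `(A * B).trace = 0` imply `√B * A = 0`. -/
lemma usd_sqrt_mul_eq_zero {n : ℕ} {A B : Matrix (Fin n) (Fin n) ℂ}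
    (hA : A.PosSemidef) (hB : B.PosSemidef) (h : (A * B).trace = 0) :
    hB.sqrt * A = 0 := by
  have h0 : ((hB.sqrt * hA.sqrt)ᴴ * (hB.sqrt * hA.sqrt)).trace = 0 := by
    have e1 : (hB.sqrt * hA.sqrt)ᴴ * (hB.sqrt * hA.sqrt)
        = hA.sqrt * (hB.sqrt * hB.sqrt) * hA.sqrt := by
      rw [conjTranspose_mul, hA.posSemidef_sqrt.1, hB.posSemidef_sqrt.1]
      noncomm_ring
    rw [e1, hB.sqrt_mul_self, trace_mul_comm, ← mul_assoc, hA.sqrt_mul_self]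
    exact h
  have hz : hB.sqrt * hA.sqrt = 0 := usd_eq_zero_of_trace h0
  calc hB.sqrt * A = (hB.sqrt * hA.sqrt) * hA.sqrt := by rw [mul_assoc, hA.sqrt_mul_self]
    _ = 0 := by rw [hz, zero_mul]

/-- **Theorem 1 (bound part).** For two density matrices `ρ0, ρ1` with a priori
probabilities `η0, η1` and any USD POVM `(E0, E1, E?)`, the partial failure
probabilities satisfy `Q0 * Q1 ≥ η0 * η1 * F ^ 2`, where `F` is the fidelity. -/
theorem product_failure_bound {n : ℕ}
    (ρ0 ρ1 E0 E1 Eq : Matrix (Fin n) (Fin n) ℂ)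
    (hρ0 : ρ0.PosSemidef) (hρ0tr : ρ0.trace = 1)
    (hρ1 : ρ1.PosSemidef) (hρ1tr : ρ1.trace = 1)
    (η0 η1 : ℝ) (hη0 : 0 ≤ η0) (hη1 : 0 ≤ η1) (hη : η0 + η1 = 1)
    (hE0 : E0.PosSemidef) (hE1 : E1.PosSemidef) (hEq : Eq.PosSemidef)
    (hsum : E0 + E1 + Eq = 1)
    (husd0 : (E0 * ρ1).trace = 0) (husd1 : (E1 * ρ0).trace = 0) :
    η0 * η1 * ((msqrt (msqrt ρ0 * ρ1 * msqrt ρ0)).trace.re) ^ 2 ≤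
      (η0 * (Eq * ρ0).trace.re) * (η1 * (Eq * ρ1).trace.re) := by
  have hms0 : msqrt ρ0 = hρ0.sqrt := dif_pos hρ0
  rw [hms0]
  set s0 := hρ0.sqrt with hs0def
  set s1 := hρ1.sqrt with hs1def
  set f := hEq.sqrt with hfdef
  have hs0 : s0ᴴ = s0 := hρ0.posSemidef_sqrt.1
  have hs1 : s1ᴴ = s1 := hρ1.posSemidef_sqrt.1
  have hfH : fᴴ = f := hEq.posSemidef_sqrt.1
  have hs0s0 : s0 * s0 = ρ0 := hρ0.sqrt_mul_self
  have hs1s1 : s1 * s1 = ρ1 := hρ1.sqrt_mul_self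
  have hff : f * f = Eq := hEq.sqrt_mul_self
  -- Step A : orthogonality relations
  have hA1 : s1 * E0 = 0 := usd_sqrt_mul_eq_zero hE0 hρ1 husd0
  have hA2 : s0 * E1 = 0 := usd_sqrt_mul_eq_zero hE1 hρ0 husd1
  have hA2' : E1 * s0 = 0 := by
    have h := congrArg conjTranspose hA2
    rwa [conjTranspose_mul, hE1.1, hs0, conjTranspose_zero] at h
  -- Step B : key identity
  have hEqexp : Eq = 1 - E0 - E1 := by rw [← hsum]; abel
  have hkey : s1 * Eq * s0 = s1 * s0 := by
    rw [hEqexp]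
    have h1 : s1 * (1 - E0 - E1) * s0 = s1 * s0 - (s1 * E0) * s0 - s1 * (E1 * s0) := by
      noncomm_ring
    rw [h1, hA1, hA2', zero_mul, mul_zero, sub_zero, sub_zero]
  -- Step C : the fidelity matrix
  set A := s1 * s0 with hAdef
  have hAM : Aᴴ * A = s0 * ρ1 * s0 := by
    rw [hAdef, conjTranspose_mul, hs0, hs1, ← hs1s1]
    noncomm_ring
  have hM : (s0 * ρ1 * s0).PosSemidef := hAM ▸ posSemidef_conjTranspose_mul_self A
  set M := s0 * ρ1 * s0 with hMdef
  have hmsM : msqrt M = hM.sqrt := dif_pos hM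
  rw [hmsM]
  -- Step D : spectral data
  set U : Matrix (Fin n) (Fin n) ℂ := (hM.1.eigenvectorUnitary : Matrix (Fin n) (Fin n) ℂ) with hUdef
  set ev : Fin n → ℝ := hM.1.eigenvalues with hevdef
  have hUU : Uᴴ * U = 1 := by
    have := Matrix.mem_unitaryGroup_iff'.mp (Matrix.IsHermitian.eigenvectorUnitary hM.1).2
    rwa [star_eq_conjTranspose] at this
  have hUU' : U * Uᴴ = 1 := by
    have := Matrix.mem_unitaryGroup_iff.mp (Matrix.IsHermitian.eigenvectorUnitary hM.1).2
    rwa [star_eq_conjTranspose] at this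
  have hdiag : Uᴴ * M * U = diagonal (RCLike.ofReal ∘ ev) := by
    have hA := hM.1.spectral_theorem
    rw [Unitary.conjStarAlgAut_apply] at hA
    have hsU : (star hM.1.eigenvectorUnitary : Matrix (Fin n) (Fin n) ℂ) = Uᴴ := rfl
    rw [hsU] at hA
    conv_lhs => rw [hA]
    calc Uᴴ * (U * diagonal (RCLike.ofReal ∘ ev) * Uᴴ) * U
        = (Uᴴ * U) * diagonal (RCLike.ofReal ∘ ev) * (Uᴴ * U) := by noncomm_ring
      _ = _ := by rw [hUU, one_mul, mul_one]
  set d : Fin n → ℂ := fun i => ((Real.sqrt (ev i))⁻¹ : ℝ) with hddef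
  have hdstar : star d = d := funext fun i => by simp [hddef, Complex.conj_ofReal]
  set P := U * diagonal d * Uᴴ with hPdef
  have hPH : Pᴴ = P := by
    rw [hPdef, conjTranspose_mul, conjTranspose_mul, diagonal_conjTranspose, hdstar,
      conjTranspose_conjTranspose, mul_assoc]
  set W := A * P with hWdef
  set e : Fin n → ℂ := fun i => d i * (RCLike.ofReal (ev i) : ℂ) * d i with hedef
  have hWW : Wᴴ * W = U * diagonal e * Uᴴ := by
    have h1 : Wᴴ * W = P * (Aᴴ * A) * P := by
      rw [hWdef, conjTranspose_mul, hPH]; noncomm_ring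
    rw [h1, hAM]
    calc P * M * P = U * diagonal d * (Uᴴ * M * U) * (diagonal d * Uᴴ) := by
          rw [hPdef]; noncomm_ring
      _ = U * diagonal d * (diagonal (RCLike.ofReal ∘ ev) * (diagonal d * Uᴴ)) := by
          rw [hdiag, mul_assoc]
      _ = U * diagonal e * Uᴴ := by
          simp only [← mul_assoc, diagonal_mul_diagonal]
          rw [mul_assoc U, diagonal_mul_diagonal]
          congr 2
          funext i
          simp [hedef, mul_assoc]
  -- eigenvalue facts
  have hevnn : ∀ i, 0 ≤ ev i := fun i => hM.eigenvalues_nonneg i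
  have hde : ∀ i, e i = if ev i = 0 then 0 else 1 := by
    intro i
    by_cases hz : ev i = 0
    · simp [hedef, hddef, hz]
    · have hpos : 0 < ev i := lt_of_le_of_ne (hevnn i) (Ne.symm hz)
      have hs : Real.sqrt (ev i) ≠ 0 := by positivity
      have hrr : (Real.sqrt (ev i))⁻¹ * ev i * (Real.sqrt (ev i))⁻¹ = 1 := by
        rw [← Real.mul_self_sqrt (hevnn i)]
        field_simp
        rw [Real.sqrt_sq (Real.sqrt_nonneg _)]
      simp only [hedef, hddef, hz, if_false]
      have h2 := congrArg (fun r : ℝ => (RCLike.ofReal r : ℂ)) hrr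
      push_cast at h2
      simpa using h2
  have h1mW : (1 - Wᴴ * W).PosSemidef := by
    have heq1 : (1 : Matrix (Fin n) (Fin n) ℂ) - Wᴴ * W
        = U * diagonal (fun i => 1 - e i) * Uᴴ := by
      have hd1 : diagonal (fun i => (1:ℂ) - e i) = 1 - diagonal e := by
        rw [← diagonal_one, diagonal_sub]
      rw [hWW, hd1, Matrix.mul_sub, Matrix.sub_mul, mul_one, hUU']
    rw [heq1]
    refine Matrix.PosSemidef.mul_mul_conjTranspose_same ?_ U
    refine posSemidef_diagonal_iff.mpr fun i => ?_
    rw [hde i]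
    by_cases hz : ev i = 0 <;> simp [hz]
  -- the two trace identities for W
  have hWA : (Wᴴ * A).trace = ∑ i, (RCLike.ofReal (Real.sqrt (ev i)) : ℂ) := by
    have h1 : Wᴴ * A = P * M := by
      rw [hWdef, conjTranspose_mul, hPH, mul_assoc, hAM]
    have h2 : P * M = U * (diagonal d * (Uᴴ * M)) := by
      rw [hPdef]; noncomm_ring
    have h3 : diagonal d * (Uᴴ * M) * U = diagonal d * (Uᴴ * M * U) := by
      noncomm_ring
    rw [h1, h2, trace_mul_comm, h3, hdiag, diagonal_mul_diagonal, trace_diagonal]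
    refine Finset.sum_congr rfl fun i _ => ?_
    simp only [Pi.mul_apply, Function.comp_apply]
    by_cases hz : ev i = 0
    · simp [hddef, hz]
    · have hpos : 0 < ev i := lt_of_le_of_ne (hevnn i) (Ne.symm hz)
      have hrr : (Real.sqrt (ev i))⁻¹ * ev i = Real.sqrt (ev i) := by
        rw [← Real.mul_self_sqrt (hevnn i)]
        field_simp
        rw [Real.sqrt_sq (Real.sqrt_nonneg _)]
      simp only [hddef]
      have h2 := congrArg (fun r : ℝ => (RCLike.ofReal r : ℂ)) hrr
      push_cast at h2
      simpa using h2
  have hsqtr : hM.sqrt.trace = ∑ i, (RCLike.ofReal (Real.sqrt (ev i)) : ℂ) := by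
    rw [Matrix.PosSemidef.sqrt, star_eq_conjTranspose, trace_mul_comm, ← mul_assoc, hUU,
      one_mul, trace_diagonal]
    rfl
  -- Cauchy–Schwarz setup
  set Z := s0 * f with hZdef
  set X := W * Z with hXdef
  set Y := s1 * f with hYdef
  have hZH : Zᴴ = f * s0 := by rw [hZdef, conjTranspose_mul, hs0, hfH]
  have hYtr : (Yᴴ * Y).trace = (Eq * ρ1).trace := by
    have h1 : Yᴴ * Y = f * (s1 * s1) * f := by
      rw [hYdef, conjTranspose_mul, hs1, hfH]; noncomm_ring
    rw [h1, hs1s1, trace_mul_comm, ← mul_assoc, hff]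
  have hZtr : (Zᴴ * Z).trace = (Eq * ρ0).trace := by
    have h1 : Zᴴ * Z = f * (s0 * s0) * f := by
      rw [hZH, hZdef]; noncomm_ring
    rw [h1, hs0s0, trace_mul_comm, ← mul_assoc, hff]
  have hdecomp : Zᴴ * Z = Xᴴ * X + Zᴴ * (1 - Wᴴ * W) * Z := by
    have hX : Xᴴ * X = Zᴴ * (Wᴴ * W) * Z := by
      rw [hXdef, conjTranspose_mul]; noncomm_ring
    rw [Matrix.mul_sub, mul_one, Matrix.sub_mul, hX]
    abel
  have hXle : (Xᴴ * X).trace.re ≤ (Eq * ρ0).trace.re := by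
    have h1 := congrArg (fun m => (Matrix.trace m).re) hdecomp
    simp only [trace_add, Complex.add_re] at h1
    have h2 : 0 ≤ (Zᴴ * (1 - Wᴴ * W) * Z).trace.re :=
      usd_trace_re_nonneg (h1mW.conjTranspose_mul_mul_same Z)
    rw [hZtr] at h1
    linarith
  have hXYtr : (Xᴴ * Y).trace = ∑ i, (RCLike.ofReal (Real.sqrt (ev i)) : ℂ) := by
    have h1 : Xᴴ * Y = Zᴴ * (Wᴴ * Y) := by
      rw [hXdef, conjTranspose_mul, mul_assoc]
    rw [h1, trace_mul_comm]
    have h2 : Wᴴ * Y * Zᴴ = Wᴴ * (s1 * Eq * s0) := by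
      rw [hZH, hYdef, ← hff]
      noncomm_ring
    rw [h2, hkey, ← hWA, hAdef]
  -- put everything together
  have hcs := usd_cs X Y
  rw [hXYtr, hYtr] at hcs
  set S : ℝ := ∑ i, Real.sqrt (ev i) with hSdef
  have hsum_eq : (∑ i, (RCLike.ofReal (Real.sqrt (ev i)) : ℂ)) = (S : ℂ) := by
    rw [hSdef]; push_cast; rfl
  have hSnn : 0 ≤ S := Finset.sum_nonneg fun i _ => Real.sqrt_nonneg _
  have hnorm : ‖(∑ i, (RCLike.ofReal (Real.sqrt (ev i)) : ℂ))‖ = S := by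
    rw [hsum_eq, Complex.norm_real, Real.norm_eq_abs, abs_of_nonneg hSnn]
  rw [hnorm] at hcs
  have hFre : hM.sqrt.trace.re = S := by
    rw [hsqtr, hsum_eq, Complex.ofReal_re]
  rw [hFre]
  have hb : 0 ≤ (Eq * ρ1).trace.re := by
    rw [← hYtr]; exact usd_trace_re_nonneg (posSemidef_conjTranspose_mul_self Y)
  have hxx : 0 ≤ (Xᴴ * X).trace.re :=
    usd_trace_re_nonneg (posSemidef_conjTranspose_mul_self X)
  have hS2 : S ^ 2 ≤ (Eq * ρ0).trace.re * (Eq * ρ1).trace.re := by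
    calc S ^ 2 ≤ (Xᴴ * X).trace.re * (Eq * ρ1).trace.re := hcs
      _ ≤ (Eq * ρ0).trace.re * (Eq * ρ1).trace.re := by
          exact mul_le_mul_of_nonneg_right hXle hb
  calc η0 * η1 * S ^ 2 ≤ η0 * η1 * ((Eq * ρ0).trace.re * (Eq * ρ1).trace.re) := by
        exact mul_le_mul_of_nonneg_left hS2 (mul_nonneg hη0 hη1)
    _ = (η0 * (Eq * ρ0).trace.re) * (η1 * (Eq * ρ1).trace.re) := by ring
end

section
/- Let ρ0 and ρ1 be n×n complex density matrices with a priori probabilities η0, η1 > 0, η0 + η1 = 1, let F = Tr(√(√ρ0 · ρ1 · √ρ0)), and let P0, P1 be the orthogonal projections onto the ranges of ρ0, ρ1. If √η0 · Tr(P1 ρ0) ≤ √η1 · F and √η1 · Tr(P0 ρ1) ≤ √η0 · F (second regime), then for any USD POVM (E0, E1, E?) the failure probability Q = η0·Tr(E? ρ0) + η1·Tr(E? ρ1) satisfies Q ≥ 2·√(η0·η1)·F. -/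
open Matrix
open scoped ComplexOrder

/-- `P` is the orthogonal projection onto the range (support) of `A`. -/
def IsRangeProj {n : ℕ} (A P : Matrix (Fin n) (Fin n) ℂ) : Prop :=
  P.IsHermitian ∧ P * P = P ∧
    LinearMap.range P.mulVecLin = LinearMap.range A.mulVecLin

namespace USDAux

variable {n : ℕ}

lemma trace_ctm (A : Matrix (Fin n) (Fin n) ℂ) :
    (Aᴴ * A).trace = ((∑ i : Fin n, ∑ j : Fin n, Complex.normSq (A i j) : ℝ) : ℂ) := by
  simp only [Matrix.trace, Matrix.diag, Matrix.mul_apply, Matrix.conjTranspose_apply]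
  push_cast
  rw [Finset.sum_comm]
  refine Finset.sum_congr rfl fun i _ => Finset.sum_congr rfl fun j _ => ?_
  rw [mul_comm, Complex.star_def, Complex.mul_conj]

lemma trace_ctm_re_nonneg (A : Matrix (Fin n) (Fin n) ℂ) : 0 ≤ (Aᴴ * A).trace.re := by
  rw [trace_ctm, Complex.ofReal_re]
  exact Finset.sum_nonneg fun _ _ => Finset.sum_nonneg fun _ _ => Complex.normSq_nonneg _

lemma eq_zero_of_trace_ctm {A : Matrix (Fin n) (Fin n) ℂ} (h : (Aᴴ * A).trace = 0) : A = 0 := by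
  rw [trace_ctm, Complex.ofReal_eq_zero] at h
  ext i j
  have h1 : ∀ i ∈ Finset.univ, (0:ℝ) ≤ ∑ j : Fin n, Complex.normSq (A i j) := by
    intro i _; exact Finset.sum_nonneg fun _ _ => Complex.normSq_nonneg _
  have h2 := (Finset.sum_eq_zero_iff_of_nonneg h1).mp h i (Finset.mem_univ i)
  have h3 : ∀ j ∈ Finset.univ, (0:ℝ) ≤ Complex.normSq (A i j) := by
    intro j _; exact Complex.normSq_nonneg _
  have h4 := (Finset.sum_eq_zero_iff_of_nonneg h3).mp h2 j (Finset.mem_univ j)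
  simpa using Complex.normSq_eq_zero.mp h4

lemma trace_cs (B C : Matrix (Fin n) (Fin n) ℂ) :
    (Bᴴ * C).trace.re ≤ Real.sqrt ((Bᴴ * B).trace.re) * Real.sqrt ((Cᴴ * C).trace.re) := by
  classical
  let f : Matrix (Fin n) (Fin n) ℂ → EuclideanSpace ℂ (Fin n × Fin n) :=
    fun A => WithLp.toLp 2 (fun p => A p.1 p.2)
  have hinner : ∀ A₁ A₂ : Matrix (Fin n) (Fin n) ℂ,
      (inner ℂ (f A₁) (f A₂) : ℂ) = (A₁ᴴ * A₂).trace := by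
    intro A₁ A₂
    simp only [PiLp.inner_apply, RCLike.inner_apply, Matrix.trace, Matrix.diag,
      Matrix.mul_apply, Matrix.conjTranspose_apply, f]
    rw [Fintype.sum_prod_type, Finset.sum_comm]
    exact Finset.sum_congr rfl fun _ _ => Finset.sum_congr rfl fun _ _ => mul_comm _ _
  calc (Bᴴ * C).trace.re = (inner ℂ (f B) (f C) : ℂ).re := by rw [hinner]
    _ ≤ ‖(inner ℂ (f B) (f C) : ℂ)‖ := Complex.re_le_norm _
    _ ≤ ‖f B‖ * ‖f C‖ := norm_inner_le_norm _ _
    _ = Real.sqrt ((Bᴴ * B).trace.re) * Real.sqrt ((Cᴴ * C).trace.re) := by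
        rw [@norm_eq_sqrt_re_inner ℂ, @norm_eq_sqrt_re_inner ℂ, hinner, hinner]
        norm_num

end USDAux

namespace USDAux2
open USDAux
variable {n : ℕ}

lemma mul_sqrt_zero {E ρ : Matrix (Fin n) (Fin n) ℂ} (hE : E.PosSemidef) (hρ : ρ.PosSemidef)
    (h : (E * ρ).trace = 0) : E * hρ.sqrt = 0 ∧ hρ.sqrt * E = 0 := by
  have hS : (hρ.sqrt)ᴴ = hρ.sqrt := hρ.posSemidef_sqrt.1
  have hT : (hE.sqrt)ᴴ = hE.sqrt := hE.posSemidef_sqrt.1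
  have hTS : hE.sqrt * hρ.sqrt = 0 := by
    apply eq_zero_of_trace_ctm
    have e1 : (hE.sqrt * hρ.sqrt)ᴴ * (hE.sqrt * hρ.sqrt) = hρ.sqrt * (E * hρ.sqrt) := by
      rw [conjTranspose_mul, hS, hT, mul_assoc, ← mul_assoc hE.sqrt hE.sqrt,
        hE.sqrt_mul_self]
    rw [e1, Matrix.trace_mul_comm, mul_assoc, hρ.sqrt_mul_self, h]
  have hES : E * hρ.sqrt = 0 := by
    rw [← hE.sqrt_mul_self, mul_assoc, hTS, mul_zero]
  refine ⟨hES, ?_⟩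
  have := congrArg conjTranspose hES
  rwa [conjTranspose_mul, hS, hE.1.eq, conjTranspose_zero] at this

end USDAux2

open USDAux USDAux2

/-- **Theorem 3, second regime.** If `√η0·Tr(P1 ρ0) ≤ √η1·F` and
`√η1·Tr(P0 ρ1) ≤ √η0·F`, then any USD POVM has failure probability
`Q ≥ 2·√(η0·η1)·F`. -/
theorem failure_bound_second_regime {n : ℕ}
    (ρ0 ρ1 E0 E1 Eq P0 P1 : Matrix (Fin n) (Fin n) ℂ)
    (hρ0 : ρ0.PosSemidef) (hρ0tr : ρ0.trace = 1)
    (hρ1 : ρ1.PosSemidef) (hρ1tr : ρ1.trace = 1)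
    (η0 η1 : ℝ) (hη0 : 0 < η0) (hη1 : 0 < η1) (hη : η0 + η1 = 1)
    (hP0 : IsRangeProj ρ0 P0) (hP1 : IsRangeProj ρ1 P1)
    (hregime1 : Real.sqrt η0 * (P1 * ρ0).trace.re ≤
      Real.sqrt η1 * (msqrt (msqrt ρ0 * ρ1 * msqrt ρ0)).trace.re)
    (hregime2 : Real.sqrt η1 * (P0 * ρ1).trace.re ≤
      Real.sqrt η0 * (msqrt (msqrt ρ0 * ρ1 * msqrt ρ0)).trace.re)
    (hE0 : E0.PosSemidef) (hE1 : E1.PosSemidef) (hEq : Eq.PosSemidef)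
    (hsum : E0 + E1 + Eq = 1)
    (husd0 : (E0 * ρ1).trace = 0) (husd1 : (E1 * ρ0).trace = 0) :
    2 * Real.sqrt (η0 * η1) * (msqrt (msqrt ρ0 * ρ1 * msqrt ρ0)).trace.re ≤
      η0 * (Eq * ρ0).trace.re + η1 * (Eq * ρ1).trace.re := by
  classical
  set S0 := hρ0.sqrt with hS0def
  set S1 := hρ1.sqrt with hS1def
  set T := hEq.sqrt with hTdef
  have hS0 : S0ᴴ = S0 := hρ0.posSemidef_sqrt.1
  have hS1 : S1ᴴ = S1 := hρ1.posSemidef_sqrt.1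
  have hT : Tᴴ = T := hEq.posSemidef_sqrt.1
  have hmρ0 : msqrt ρ0 = S0 := by unfold msqrt; exact dif_pos hρ0
  rw [hmρ0]
  set M := S0 * ρ1 * S0 with hMdef
  obtain ⟨hE0S1, hS1E0⟩ := mul_sqrt_zero hE0 hρ1 husd0
  obtain ⟨hE1S0, hS0E1⟩ := mul_sqrt_zero hE1 hρ0 husd1
  rw [← hS1def] at hE0S1 hS1E0
  rw [← hS0def] at hE1S0 hS0E1
  set Aa := S1 * S0 with hAadef
  set X := T * S1 with hXdef
  set Y := T * S0 with hYdef
  have hXH : Xᴴ = S1 * T := by rw [hXdef, conjTranspose_mul, hS1, hT]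
  have hYH : Yᴴ = S0 * T := by rw [hYdef, conjTranspose_mul, hS0, hT]
  have hXY : Xᴴ * Y = S1 * Eq * S0 := by
    rw [hXH, hYdef, mul_assoc, ← mul_assoc T T, hEq.sqrt_mul_self, ← mul_assoc]
  have hA_eq : Aa = Xᴴ * Y := by
    rw [hXY, hAadef]
    have h1 : S1 * ((E0 + E1 + Eq) * S0) = S1 * S0 := by rw [hsum, one_mul]
    calc S1 * S0 = S1 * ((E0 + E1 + Eq) * S0) := h1.symm
      _ = S1 * (E0 * S0) + S1 * (E1 * S0) + S1 * (Eq * S0) := by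
          rw [add_mul, add_mul, mul_add, mul_add]
      _ = S1 * Eq * S0 := by
          rw [← mul_assoc S1 E0 S0, ← mul_assoc S1 Eq S0, hE1S0, hS1E0, zero_mul, mul_zero,
            zero_add, zero_add]
  have hMA : M = Aaᴴ * Aa := by
    rw [hAadef, conjTranspose_mul, hS0, hS1, hMdef, ← hρ1.sqrt_mul_self]
    simp only [mul_assoc]
    rfl
  have hM : M.PosSemidef := by rw [hMA]; exact posSemidef_conjTranspose_mul_self Aa
  have hmM : msqrt M = hM.sqrt := by unfold msqrt; exact dif_pos hM
  rw [hmM]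
  set lam := hM.1.eigenvalues with hlam
  set V := (hM.1.eigenvectorUnitary : Matrix (Fin n) (Fin n) ℂ) with hVdef
  have hlam0 : ∀ i, 0 ≤ lam i := hM.eigenvalues_nonneg
  have hVV : Vᴴ * V = 1 := by
    rw [← Matrix.star_eq_conjTranspose]
    exact (Matrix.mem_unitaryGroup_iff'.mp hM.1.eigenvectorUnitary.2)
  have hVV' : V * Vᴴ = 1 := by
    rw [← Matrix.star_eq_conjTranspose]
    exact (Matrix.mem_unitaryGroup_iff.mp hM.1.eigenvectorUnitary.2)
  have hdiag : Vᴴ * M * V = diagonal (fun i => ((lam i : ℝ) : ℂ)) := by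
    rw [← Matrix.star_eq_conjTranspose]
    have hU : (star hM.1.eigenvectorUnitary : Matrix (Fin n) (Fin n) ℂ) *
        (hM.1.eigenvectorUnitary : Matrix (Fin n) (Fin n) ℂ) = 1 :=
      Matrix.mem_unitaryGroup_iff'.mp hM.1.eigenvectorUnitary.2
    have hs := hM.1.spectral_theorem
    rw [Unitary.conjStarAlgAut_apply] at hs
    calc _ = (star hM.1.eigenvectorUnitary : Matrix (Fin n) (Fin n) ℂ) *
        ((hM.1.eigenvectorUnitary : Matrix (Fin n) (Fin n) ℂ) *
          diagonal (RCLike.ofReal ∘ hM.1.eigenvalues) *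
          (star hM.1.eigenvectorUnitary : Matrix (Fin n) (Fin n) ℂ)) *
        (hM.1.eigenvectorUnitary : Matrix (Fin n) (Fin n) ℂ) := by rw [← hs]
      _ = _ := by
        simp only [mul_assoc]
        rw [← mul_assoc _ (hM.1.eigenvectorUnitary : Matrix (Fin n) (Fin n) ℂ), hU, one_mul,
          mul_one]
        rfl
  -- trace of sqrt M
  have hsqrtM : hM.sqrt = V * diagonal (fun i => ((Real.sqrt (lam i) : ℝ) : ℂ)) * Vᴴ := by
    rw [← Matrix.star_eq_conjTranspose]
    rfl
  have hFtr : (hM.sqrt).trace = ((∑ i, Real.sqrt (lam i) : ℝ) : ℂ) := by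
    rw [hsqrtM, Matrix.trace_mul_cycle, hVV, one_mul, Matrix.trace_diagonal]
    push_cast
    rfl
  rw [hFtr, Complex.ofReal_re]
  -- the partial isometry pieces
  set dR : Fin n → ℝ := fun i => if lam i = 0 then 0 else (Real.sqrt (lam i))⁻¹ with hdR
  set D' : Matrix (Fin n) (Fin n) ℂ := diagonal (fun i => ((dR i : ℝ) : ℂ)) with hD'
  have hD'H : D'ᴴ = D' := by
    rw [hD', diagonal_conjTranspose]
    refine congrArg diagonal (funext fun i => ?_)
    simp only [Pi.star_apply, RCLike.star_def]
    exact Complex.conj_ofReal _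
  set W := Aa * V * D' with hWdef
  have hWH : Wᴴ = D' * (Vᴴ * Aaᴴ) := by
    rw [hWdef, conjTranspose_mul, conjTranspose_mul, hD'H]
  have hWAV : Wᴴ * (Aa * V) = D' * diagonal (fun i => ((lam i : ℝ) : ℂ)) := by
    rw [hWH, ← hdiag, hMA]
    simp only [mul_assoc]
  set J : Matrix (Fin n) (Fin n) ℂ := diagonal (fun i => if lam i = 0 then (0:ℂ) else 1) with hJ
  have hWW : Wᴴ * W = J := by
    rw [hWdef, ← mul_assoc, hWAV, hJ, hD', diagonal_mul_diagonal, diagonal_mul_diagonal]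
    refine congrArg diagonal (funext fun i => ?_)
    by_cases h : lam i = 0
    · simp [hdR, h]
    · have hpos : 0 < lam i := (hlam0 i).lt_of_ne (Ne.symm h)
      have hr : (Real.sqrt (lam i))⁻¹ * lam i * (Real.sqrt (lam i))⁻¹ = 1 := by
        rw [← Real.mul_self_sqrt (hlam0 i)]
        have hs : Real.sqrt (lam i) ≠ 0 := Real.sqrt_ne_zero'.mpr hpos
        field_simp
        rw [Real.sqrt_sq (Real.sqrt_nonneg _)]
      simp only [hdR, if_neg h]
      norm_cast
  have hWJ : W * J = W := by
    rw [hWdef, hJ, hD', mul_assoc, mul_assoc, diagonal_mul_diagonal]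
    rw [show (fun i => ((dR i : ℝ) : ℂ) * if lam i = 0 then (0:ℂ) else 1) = fun i => ((dR i : ℝ) : ℂ) from
      funext fun i => by by_cases h : lam i = 0 <;> simp [hdR, h]]
    rw [← mul_assoc]
  -- the trace identity giving F
  have hXYA : Xᴴ * Y = Aa := hA_eq.symm
  have htrF : ((X * W)ᴴ * (Y * V)).trace = ((∑ i, Real.sqrt (lam i) : ℝ) : ℂ) := by
    have e1 : (X * W)ᴴ * (Y * V) = Wᴴ * (Aa * V) := by
      rw [conjTranspose_mul, mul_assoc, ← mul_assoc Xᴴ Y V, hXYA, ← mul_assoc]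
    rw [e1, hWAV, hD', diagonal_mul_diagonal, Matrix.trace_diagonal]
    push_cast
    refine Finset.sum_congr rfl fun i _ => ?_
    by_cases h : lam i = 0
    · simp [hdR, h]
    · have hpos : 0 < lam i := (hlam0 i).lt_of_ne (Ne.symm h)
      have hr : (Real.sqrt (lam i))⁻¹ * lam i = Real.sqrt (lam i) := by
        rw [← Real.mul_self_sqrt (hlam0 i)]
        have hs : Real.sqrt (lam i) ≠ 0 := Real.sqrt_ne_zero'.mpr hpos
        field_simp
        rw [Real.sqrt_sq (Real.sqrt_nonneg _)]
      simp only [hdR, if_neg h]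
      norm_cast
  -- Cauchy-Schwarz
  have hCS := trace_cs (X * W) (Y * V)
  rw [htrF, Complex.ofReal_re] at hCS
  -- compute the Y side
  have hYY : (Yᴴ * Y).trace = (Eq * ρ0).trace := by
    rw [hYH, hYdef, mul_assoc, ← mul_assoc T T, hEq.sqrt_mul_self, Matrix.trace_mul_comm,
      mul_assoc, hρ0.sqrt_mul_self]
  have hYV : ((Y * V)ᴴ * (Y * V)).trace = (Eq * ρ0).trace := by
    have e : (Y * V)ᴴ * (Y * V) = Vᴴ * (Yᴴ * Y) * V := by
      rw [conjTranspose_mul Y V]; simp only [mul_assoc]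
    rw [e, Matrix.trace_mul_cycle, hVV', one_mul, hYY]
  -- compute the X side
  have hXX : (Xᴴ * X).trace = (Eq * ρ1).trace := by
    rw [hXH, hXdef, mul_assoc, ← mul_assoc T T, hEq.sqrt_mul_self, Matrix.trace_mul_comm,
      mul_assoc, hρ1.sqrt_mul_self]
  set P := W * Wᴴ with hPdef
  have hPP : P * P = P := by
    rw [hPdef, mul_assoc, ← mul_assoc Wᴴ W Wᴴ, hWW, ← mul_assoc, hWJ]
  have hPH : Pᴴ = P := by rw [hPdef, conjTranspose_mul, conjTranspose_conjTranspose]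
  have hQQ : (1 - P) * (1 - P) = 1 - P := by
    rw [mul_sub, mul_one, sub_mul, one_mul, hPP, sub_self, sub_zero]
  have hQH : (1 - P)ᴴ = 1 - P := by rw [conjTranspose_sub, conjTranspose_one, hPH]
  have hXQ : (Xᴴ * X * (1 - P)).trace = ((X * (1 - P))ᴴ * (X * (1 - P))).trace := by
    have e : (X * (1 - P))ᴴ * (X * (1 - P)) = (1 - P) * (Xᴴ * X * (1 - P)) := by
      rw [conjTranspose_mul X (1 - P), hQH]; simp only [mul_assoc]
    rw [e]
    conv_rhs => rw [Matrix.trace_mul_comm]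
    rw [mul_assoc (Xᴴ * X) (1 - P) (1 - P), hQQ]
  have hXW : ((X * W)ᴴ * (X * W)).trace = (Xᴴ * X * P).trace := by
    have e : (X * W)ᴴ * (X * W) = Wᴴ * (Xᴴ * X) * W := by
      rw [conjTranspose_mul X W]; simp only [mul_assoc]
    rw [e]
    conv_lhs => rw [Matrix.trace_mul_cycle, ← hPdef, Matrix.trace_mul_comm]
  -- nonnegativity and bounds
  have haux : (Xᴴ * X * (1 - P)).trace = (Xᴴ * X).trace - (Xᴴ * X * P).trace := by
    rw [mul_sub, mul_one, Matrix.trace_sub]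
  have hXQ_nonneg : 0 ≤ (Xᴴ * X * (1 - P)).trace.re := by
    rw [hXQ]; exact trace_ctm_re_nonneg _
  have ha : ((X * W)ᴴ * (X * W)).trace.re ≤ (Eq * ρ1).trace.re := by
    rw [hXW]
    have := hXQ_nonneg
    rw [haux] at this
    rw [← hXX]
    simp only [Complex.sub_re] at this
    linarith
  -- assemble
  set F := ∑ i, Real.sqrt (lam i) with hF
  set x := (Eq * ρ0).trace.re with hx
  set y := (Eq * ρ1).trace.re with hy
  have hx0 : 0 ≤ x := by
    rw [hx, ← hYY]; exact trace_ctm_re_nonneg _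
  have hy0 : 0 ≤ y := by
    rw [hy, ← hXX]; exact trace_ctm_re_nonneg _
  have ha0 : 0 ≤ ((X * W)ᴴ * (X * W)).trace.re := trace_ctm_re_nonneg _
  have hb : Real.sqrt (((Y * V)ᴴ * (Y * V)).trace.re) = Real.sqrt x := by rw [hYV]
  have hFle : F ≤ Real.sqrt y * Real.sqrt x := by
    calc F ≤ Real.sqrt (((X * W)ᴴ * (X * W)).trace.re) *
          Real.sqrt (((Y * V)ᴴ * (Y * V)).trace.re) := hCS
      _ ≤ Real.sqrt y * Real.sqrt x := by
          rw [hb]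
          exact mul_le_mul_of_nonneg_right (Real.sqrt_le_sqrt ha) (Real.sqrt_nonneg _)
  have h2 : 2 * Real.sqrt (η0 * η1) * F ≤ 2 * Real.sqrt (η0 * η1) * (Real.sqrt y * Real.sqrt x) := by
    apply mul_le_mul_of_nonneg_left hFle
    positivity
  have h3 : 2 * Real.sqrt (η0 * η1) * (Real.sqrt y * Real.sqrt x)
      = 2 * (Real.sqrt (η0 * x) * Real.sqrt (η1 * y)) := by
    rw [Real.sqrt_mul hη0.le, Real.sqrt_mul hη0.le x, Real.sqrt_mul hη1.le y]
    ring
  have h4 : 2 * (Real.sqrt (η0 * x) * Real.sqrt (η1 * y)) ≤ η0 * x + η1 * y := by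
    nlinarith [sq_nonneg (Real.sqrt (η0 * x) - Real.sqrt (η1 * y)),
      Real.sq_sqrt (mul_nonneg hη0.le hx0), Real.sq_sqrt (mul_nonneg hη1.le hy0)]
  linarith
end

section
/- Let ρ0 and ρ1 be n×n complex positive semidefinite matrices such that rank(ρ0) + rank(ρ1) = rank(ρ0 + ρ1) = n, and set Σ = ρ0 + ρ1 (which is then invertible). Then ρ0 · Σ⁻¹ · ρ1 = 0. -/
open Matrix
open scoped ComplexOrder

/-- **Corollary 1.** If `rank ρ0 + rank ρ1 = rank (ρ0 + ρ1) = n`, then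
`ρ0 · Σ⁻¹ · ρ1 = 0` where `Σ = ρ0 + ρ1`. -/
theorem parallel_addition_eq_zero {n : ℕ}
    (ρ0 ρ1 : Matrix (Fin n) (Fin n) ℂ)
    (hρ0 : ρ0.PosSemidef) (hρ1 : ρ1.PosSemidef)
    (hrank : ρ0.rank + ρ1.rank = (ρ0 + ρ1).rank)
    (hfull : (ρ0 + ρ1).rank = n) :
    ρ0 * (ρ0 + ρ1)⁻¹ * ρ1 = 0 := by
  set S := ρ0 + ρ1 with hS
  set R0 := LinearMap.range ρ0.mulVecLin with hR0def
  set R1 := LinearMap.range ρ1.mulVecLin with hR1def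
  have hR0 : Module.finrank ℂ R0 = ρ0.rank := rfl
  have hR1 : Module.finrank ℂ R1 = ρ1.rank := rfl
  -- S has full-rank range, hence is invertible
  have hrange : LinearMap.range S.mulVecLin = ⊤ := by
    apply Submodule.eq_top_of_finrank_eq
    have : Module.finrank ℂ (LinearMap.range S.mulVecLin) = S.rank := rfl
    rw [this, hfull, Module.finrank_pi]
    simp
  have hsurj : Function.Surjective S.mulVec :=
    (LinearMap.range_eq_top.mp hrange)
  have hunit : IsUnit S := Matrix.mulVec_surjective_iff_isUnit.mp hsurj
  have hdet : IsUnit S.det := (Matrix.isUnit_iff_isUnit_det S).mp hunit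
  have hinv : S * S⁻¹ = 1 := Matrix.mul_nonsing_inv S hdet
  -- R0 ⊔ R1 = ⊤
  have hsup : R0 ⊔ R1 = ⊤ := by
    apply top_le_iff.mp
    rw [← hrange]
    rintro v ⟨x, rfl⟩
    have : S.mulVecLin x = ρ0.mulVecLin x + ρ1.mulVecLin x := by
      rw [hS, Matrix.mulVecLin_add]; rfl
    rw [this]
    exact Submodule.add_mem_sup (LinearMap.mem_range_self _ x) (LinearMap.mem_range_self _ x)
  -- R0 ⊓ R1 = ⊥
  have hinf : R0 ⊓ R1 = ⊥ := by
    have h := Submodule.finrank_sup_add_finrank_inf_eq R0 R1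
    rw [hsup, finrank_top, Module.finrank_pi, hR0, hR1, hrank, hfull] at h
    simp only [Fintype.card_fin] at h
    exact Submodule.finrank_eq_zero.mp (by omega)
  -- main computation
  have key : ∀ x, (ρ0 * S⁻¹ * ρ1) *ᵥ x = 0 := by
    intro x
    set y := S⁻¹ *ᵥ (ρ1 *ᵥ x) with hy
    have hSy : S *ᵥ y = ρ1 *ᵥ x := by
      rw [hy, Matrix.mulVec_mulVec, hinv, Matrix.one_mulVec]
    have hmem : ρ0 *ᵥ y ∈ R0 ⊓ R1 := by
      constructor
      · exact ⟨y, rfl⟩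
      · have h2 : ρ0 *ᵥ y + ρ1 *ᵥ y = ρ1 *ᵥ x := by
          rw [← Matrix.add_mulVec, ← hS, hSy]
        have : ρ0 *ᵥ y = ρ1 *ᵥ (x - y) := by
          rw [Matrix.mulVec_sub]
          linear_combination (norm := module) h2
        exact this ▸ ⟨x - y, rfl⟩
    have h0 : ρ0 *ᵥ y = 0 := by
      rw [hinf] at hmem
      exact hmem
    calc (ρ0 * S⁻¹ * ρ1) *ᵥ x = ρ0 *ᵥ (S⁻¹ *ᵥ (ρ1 *ᵥ x)) := by
          rw [Matrix.mulVec_mulVec, Matrix.mulVec_mulVec]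
      _ = 0 := h0
  ext i j
  have := congrFun (key (Pi.single j 1)) i
  simpa using this
end

section
/- Let ρ0 and ρ1 be n×n complex positive semidefinite matrices with rank(ρ0) + rank(ρ1) = rank(ρ0 + ρ1) = n, and set Σ = ρ0 + ρ1. Then ρ0 · Σ⁻¹ · ρ0 = ρ0, ρ1 · Σ⁻¹ · ρ1 = ρ1, and √ρ0 · Σ⁻¹ · √ρ0 equals the orthogonal projection P0 onto the range of ρ0 (likewise √ρ1 · Σ⁻¹ · √ρ1 = P1). -/
open Matrix
open scoped ComplexOrder

private lemma mulVec_ext' {n : ℕ} {A B : Matrix (Fin n) (Fin n) ℂ}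
    (h : ∀ v, A *ᵥ v = B *ᵥ v) : A = B :=
  Matrix.toLin'.injective (LinearMap.ext fun v => by simpa [Matrix.toLin'_apply] using h v)

private lemma range_mul_le' {n : ℕ} (A B : Matrix (Fin n) (Fin n) ℂ) :
    LinearMap.range (A * B).mulVecLin ≤ LinearMap.range A.mulVecLin := by
  rw [Matrix.mulVecLin_mul]
  exact LinearMap.range_comp_le_range _ _

private lemma proj_mul_eq' {n : ℕ} {P M : Matrix (Fin n) (Fin n) ℂ} (hP : P * P = P)
    (h : LinearMap.range M.mulVecLin ≤ LinearMap.range P.mulVecLin) : P * M = M := by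
  apply mulVec_ext'
  intro v
  obtain ⟨y, hy⟩ := h (LinearMap.mem_range_self M.mulVecLin v)
  simp only [Matrix.mulVecLin_apply] at hy
  calc (P * M) *ᵥ v = P *ᵥ (M *ᵥ v) := by rw [← Matrix.mulVec_mulVec]
    _ = P *ᵥ (P *ᵥ y) := by rw [hy]
    _ = (P * P) *ᵥ y := by rw [Matrix.mulVec_mulVec]
    _ = P *ᵥ y := by rw [hP]
    _ = M *ᵥ v := hy

private lemma half_parallel {n : ℕ}
    (ρ0 ρ1 P0 : Matrix (Fin n) (Fin n) ℂ)
    (hρ0 : ρ0.PosSemidef) (hρ1 : ρ1.PosSemidef)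
    (hrank : ρ0.rank + ρ1.rank = (ρ0 + ρ1).rank)
    (hfull : (ρ0 + ρ1).rank = n)
    (hP0 : IsRangeProj ρ0 P0) :
    ρ0 * (ρ0 + ρ1)⁻¹ * ρ0 = ρ0 ∧ msqrt ρ0 * (ρ0 + ρ1)⁻¹ * msqrt ρ0 = P0 := by
  set S : Matrix (Fin n) (Fin n) ℂ := ρ0 + ρ1 with hSdef
  -- S is invertible
  have hfinrank_top : Module.finrank ℂ (Fin n → ℂ) = n := by
    simp [Module.finrank_pi]
  have hrange_top : LinearMap.range S.mulVecLin = ⊤ := by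
    apply Submodule.eq_top_of_finrank_eq
    rw [hfinrank_top]
    exact hfull
  have hSunit : IsUnit S := by
    rw [← Matrix.mulVec_surjective_iff_isUnit]
    intro v
    obtain ⟨y, hy⟩ := hrange_top ▸ Submodule.mem_top (x := v) (R := ℂ)
    exact ⟨y, hy⟩
  have hdet : IsUnit S.det := (Matrix.isUnit_iff_isUnit_det S).mp hSunit
  have hS1 : S * S⁻¹ = 1 := Matrix.mul_nonsing_inv S hdet
  have h1S : S⁻¹ * S = 1 := Matrix.nonsing_inv_mul S hdet
  have hSH : S⁻¹.IsHermitian := (hρ0.1.add hρ1.1).inv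
  -- ranges
  set R0 := LinearMap.range ρ0.mulVecLin with hR0
  set R1 := LinearMap.range ρ1.mulVecLin with hR1
  have hsup : LinearMap.range S.mulVecLin ≤ R0 ⊔ R1 := by
    rintro x ⟨v, rfl⟩
    rw [hSdef, Matrix.mulVecLin_add]
    exact Submodule.add_mem_sup (LinearMap.mem_range_self _ v) (LinearMap.mem_range_self _ v)
  have hsup_le : Module.finrank ℂ ↥(R0 ⊔ R1) ≤ n := by
    simpa [hfinrank_top] using (R0 ⊔ R1).finrank_le
  have hsup_ge : n ≤ Module.finrank ℂ ↥(R0 ⊔ R1) := by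
    have := Submodule.finrank_mono hsup
    rwa [show Module.finrank ℂ ↥(LinearMap.range S.mulVecLin) = n from hfull] at this
  have hinf : R0 ⊓ R1 = ⊥ := by
    rw [← Submodule.finrank_eq_zero (R := ℂ)]
    have h3 := Submodule.finrank_sup_add_finrank_inf_eq R0 R1
    have h4 : Module.finrank ℂ ↥R0 + Module.finrank ℂ ↥R1 = n := by
      rw [hR0, hR1]
      exact hrank.trans hfull
    omega
  -- the cross term vanishes
  have hA : ρ0 * S⁻¹ * ρ1 = 0 := by
    have hle0 : LinearMap.range (ρ0 * S⁻¹ * ρ1).mulVecLin ≤ R0 := by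
      rw [show ρ0 * S⁻¹ * ρ1 = ρ0 * (S⁻¹ * ρ1) by rw [mul_assoc]]
      exact range_mul_le' _ _
    have halt : ρ0 * S⁻¹ * ρ1 = ρ1 * (1 - S⁻¹ * ρ1) := by
      have h : ρ0 = S - ρ1 := (add_sub_cancel_right ρ0 ρ1).symm
      rw [h]
      simp only [sub_mul, mul_sub, mul_one, hS1, one_mul, mul_assoc]
    have hle1 : LinearMap.range (ρ0 * S⁻¹ * ρ1).mulVecLin ≤ R1 := by
      rw [halt]
      exact range_mul_le' _ _
    have hbot : LinearMap.range (ρ0 * S⁻¹ * ρ1).mulVecLin = ⊥ :=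
      le_bot_iff.mp (hinf ▸ le_inf hle0 hle1)
    apply mulVec_ext'
    intro v
    have : (ρ0 * S⁻¹ * ρ1).mulVecLin v ∈ (⊥ : Submodule ℂ (Fin n → ℂ)) :=
      hbot ▸ LinearMap.mem_range_self _ v
    simpa [mul_assoc] using this
  have hA' : ρ1 * S⁻¹ * ρ0 = 0 := by
    have := congrArg conjTranspose hA
    simpa [Matrix.conjTranspose_mul, hρ0.1.eq, hρ1.1.eq, hSH.eq, mul_assoc] using this
  -- main identity for ρ0
  have main1 : ρ0 * S⁻¹ * ρ0 = ρ0 := by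
    have h : ρ0 = S - ρ1 := (add_sub_cancel_right ρ0 ρ1).symm
    calc ρ0 * S⁻¹ * ρ0 = ρ0 * S⁻¹ * (S - ρ1) := by rw [← h]
      _ = ρ0 * (S⁻¹ * S) - ρ0 * S⁻¹ * ρ1 := by rw [mul_sub, mul_assoc]
      _ = ρ0 := by rw [h1S, hA, mul_one, sub_zero]
  refine ⟨main1, ?_⟩
  -- square root part
  have hmsq : msqrt ρ0 = (hρ0.1.eigenvectorUnitary : Matrix (Fin n) (Fin n) ℂ) *
      diagonal ((↑) ∘ Real.sqrt ∘ hρ0.1.eigenvalues) *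
      (star hρ0.1.eigenvectorUnitary : Matrix (Fin n) (Fin n) ℂ) := dif_pos hρ0
  set s := msqrt ρ0 with hsdef
  have hss : s * s = ρ0 := by
    rw [hmsq]
    conv_rhs => rw [hρ0.1.spectral_theorem, Unitary.conjStarAlgAut_apply]
    have hu : (star hρ0.1.eigenvectorUnitary : Matrix (Fin n) (Fin n) ℂ) *
        (hρ0.1.eigenvectorUnitary : Matrix (Fin n) (Fin n) ℂ) = 1 :=
      Unitary.coe_star_mul_self _
    calc _ = (hρ0.1.eigenvectorUnitary : Matrix (Fin n) (Fin n) ℂ) *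
          (diagonal ((↑) ∘ Real.sqrt ∘ hρ0.1.eigenvalues) *
            ((star hρ0.1.eigenvectorUnitary : Matrix (Fin n) (Fin n) ℂ) *
              (hρ0.1.eigenvectorUnitary : Matrix (Fin n) (Fin n) ℂ)) *
            diagonal ((↑) ∘ Real.sqrt ∘ hρ0.1.eigenvalues)) *
          (star hρ0.1.eigenvectorUnitary : Matrix (Fin n) (Fin n) ℂ) := by
          simp only [mul_assoc]
      _ = _ := by
          rw [hu, mul_one, diagonal_mul_diagonal]
          congr 3
          funext i
          simp only [Function.comp_apply]
          rw [← Complex.ofReal_mul, Real.mul_self_sqrt (hρ0.eigenvalues_nonneg i)]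
          rfl
  have hsH : s.IsHermitian := by
    rw [hmsq]
    have hd : star ((↑) ∘ Real.sqrt ∘ hρ0.1.eigenvalues : Fin n → ℂ) =
        ((↑) ∘ Real.sqrt ∘ hρ0.1.eigenvalues : Fin n → ℂ) := by
      funext i; simp
    simp [Matrix.IsHermitian, Matrix.conjTranspose_mul, mul_assoc, Matrix.diagonal_conjTranspose,
      ← Matrix.star_eq_conjTranspose, hd]
    rw [Matrix.star_eq_conjTranspose, Matrix.diagonal_conjTranspose, hd]
  -- ρ0 * S⁻¹ * s = s
  have hM : ρ0 * S⁻¹ * s = s := by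
    rw [← sub_eq_zero, ← self_mul_conjTranspose_eq_zero]
    have hMH : (ρ0 * S⁻¹ * s - s)ᴴ = s * S⁻¹ * ρ0 - s := by
      simp [Matrix.conjTranspose_mul, hρ0.1.eq, hSH.eq, hsH.eq, mul_assoc]
    rw [hMH]
    have e1 : ρ0 * S⁻¹ * s * (s * S⁻¹ * ρ0) = ρ0 := by
      calc ρ0 * S⁻¹ * s * (s * S⁻¹ * ρ0) = (ρ0 * S⁻¹ * (s * s)) * S⁻¹ * ρ0 := by
            simp only [mul_assoc]
        _ = ρ0 * S⁻¹ * ρ0 * S⁻¹ * ρ0 := by rw [hss, mul_assoc, mul_assoc]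
        _ = ρ0 := by rw [main1, main1]
    have e2 : ρ0 * S⁻¹ * s * s = ρ0 := by
      rw [mul_assoc, hss, main1]
    have e3 : s * (s * S⁻¹ * ρ0) = ρ0 := by
      rw [show s * (s * S⁻¹ * ρ0) = s * s * S⁻¹ * ρ0 by simp only [mul_assoc], hss, main1]
    calc (ρ0 * S⁻¹ * s - s) * (s * S⁻¹ * ρ0 - s)
        = ρ0 * S⁻¹ * s * (s * S⁻¹ * ρ0) - ρ0 * S⁻¹ * s * s
          - (s * (s * S⁻¹ * ρ0) - s * s) := by noncomm_ring
      _ = ρ0 - ρ0 - (ρ0 - ρ0) := by rw [e1, e2, e3, hss]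
      _ = 0 := by simp
  have hM' : s * S⁻¹ * ρ0 = s := by
    have := congrArg conjTranspose hM
    simpa [Matrix.conjTranspose_mul, hρ0.1.eq, hSH.eq, hsH.eq, mul_assoc] using this
  set B := s * S⁻¹ * s with hBdef
  have hBH : B.IsHermitian := by
    show (s * S⁻¹ * s).IsHermitian
    simp [Matrix.IsHermitian, Matrix.conjTranspose_mul, hSH.eq, hsH.eq, mul_assoc]
  have hBB : B * B = B := by
    calc B * B = s * S⁻¹ * (s * s) * S⁻¹ * s := by simp only [hBdef, mul_assoc]
      _ = (s * S⁻¹ * ρ0) * (S⁻¹ * s) := by rw [hss]; simp only [mul_assoc]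
      _ = s * (S⁻¹ * s) := by rw [hM']
      _ = B := by rw [hBdef, mul_assoc]
  -- range B = range ρ0
  have hrs : LinearMap.range s.mulVecLin ≤ R0 := by
    have : s = ρ0 * (S⁻¹ * s) := by rw [← mul_assoc, hM]
    rw [this]
    exact range_mul_le' _ _
  have hrB_le : LinearMap.range B.mulVecLin ≤ R0 := by
    refine le_trans ?_ hrs
    rw [show B = s * (S⁻¹ * s) by rw [hBdef, mul_assoc]]
    exact range_mul_le' _ _
  have hBρ0 : B * ρ0 = ρ0 := by
    calc B * ρ0 = s * S⁻¹ * s * (s * s) := by rw [hBdef, hss]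
      _ = s * S⁻¹ * (s * s) * s := by simp only [mul_assoc]
      _ = (s * S⁻¹ * ρ0) * s := by rw [hss]
      _ = s * s := by rw [hM']
      _ = ρ0 := hss
  have hrρ0_le : R0 ≤ LinearMap.range B.mulVecLin := by
    rw [hR0, show ρ0 = B * ρ0 from hBρ0.symm]
    exact range_mul_le' _ _
  have hrange_eq : LinearMap.range B.mulVecLin = R0 := le_antisymm hrB_le hrρ0_le
  obtain ⟨hP0H, hP0P, hP0range⟩ := hP0
  -- P0 * B = B and B * P0 = P0
  have h1 : P0 * B = B := proj_mul_eq' hP0P (by rw [hrange_eq, hP0range])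
  have h2 : B * P0 = P0 := proj_mul_eq' hBB (by rw [hrange_eq, hP0range])
  have h3 : B * P0 = B := by
    have := congrArg conjTranspose h1
    rwa [Matrix.conjTranspose_mul, hP0H.eq, hBH.eq] at this
  show B = P0
  rw [← h2, h3]

/-- If `rank ρ0 + rank ρ1 = rank (ρ0 + ρ1) = n` and `Σ = ρ0 + ρ1`, then
`ρ0 Σ⁻¹ ρ0 = ρ0`, `ρ1 Σ⁻¹ ρ1 = ρ1`, `√ρ0 Σ⁻¹ √ρ0 = P0` and `√ρ1 Σ⁻¹ √ρ1 = P1`. -/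
theorem parallel_addition_projections {n : ℕ}
    (ρ0 ρ1 P0 P1 : Matrix (Fin n) (Fin n) ℂ)
    (hρ0 : ρ0.PosSemidef) (hρ1 : ρ1.PosSemidef)
    (hrank : ρ0.rank + ρ1.rank = (ρ0 + ρ1).rank)
    (hfull : (ρ0 + ρ1).rank = n)
    (hP0 : IsRangeProj ρ0 P0) (hP1 : IsRangeProj ρ1 P1) :
    ρ0 * (ρ0 + ρ1)⁻¹ * ρ0 = ρ0 ∧
      ρ1 * (ρ0 + ρ1)⁻¹ * ρ1 = ρ1 ∧
      msqrt ρ0 * (ρ0 + ρ1)⁻¹ * msqrt ρ0 = P0 ∧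
      msqrt ρ1 * (ρ0 + ρ1)⁻¹ * msqrt ρ1 = P1 := by
  have h0 := half_parallel ρ0 ρ1 P0 hρ0 hρ1 hrank hfull hP0
  have h1 := half_parallel ρ1 ρ0 P1 hρ1 hρ0
    (by rw [add_comm ρ1 ρ0]; omega) (by rw [add_comm ρ1 ρ0]; exact hfull) hP1
  rw [add_comm ρ1 ρ0] at h1
  exact ⟨h0.1, h1.1, h0.2, h1.2⟩
end

section
/- Under the hypotheses of the optimal-POVM construction — ρ0, ρ1 n×n density matrices with rank(ρ0) + rank(ρ1) = rank(ρ0 + ρ1) = n, Σ = ρ0 + ρ1, F0 = √(√ρ0 · ρ1 · √ρ0), F1 = √(√ρ1 · ρ0 · √ρ1), V unitary with √ρ0·√ρ1 = F0·V, α > 0 with ρ0 − α·F0 and ρ1 − (1/α)·F1 positive semidefinite, and E? = Σ⁻¹·(√α·√ρ0 + (1/√α)·√ρ1·V†)·F0·(√α·√ρ0 + (1/√α)·V·√ρ1)·Σ⁻¹ — one has Tr(E? ρ0) = α·F and Tr(E? ρ1) = F/α, where F = Tr(F0); hence for a priori probabilities η0, η1 the failure probability equals η0·α·F + η1·F/α.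 -/
open Matrix
open scoped ComplexOrder

private lemma msqrt_spec {n : ℕ} {A : Matrix (Fin n) (Fin n) ℂ} (hA : A.PosSemidef) :
    (msqrt A).PosSemidef ∧ msqrt A * msqrt A = A := by
  rw [msqrt, dif_pos hA]
  set U : Matrix (Fin n) (Fin n) ℂ := (hA.1.eigenvectorUnitary : Matrix (Fin n) (Fin n) ℂ)
    with hU
  set D : Matrix (Fin n) (Fin n) ℂ := diagonal ((↑) ∘ Real.sqrt ∘ hA.1.eigenvalues) with hD
  have hUU : (star hA.1.eigenvectorUnitary : Matrix (Fin n) (Fin n) ℂ) * U = 1 :=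
    Unitary.coe_star_mul_self _
  have hsU : (star hA.1.eigenvectorUnitary : Matrix (Fin n) (Fin n) ℂ) = Uᴴ := rfl
  constructor
  · have hDpsd : D.PosSemidef := posSemidef_diagonal_iff.mpr (fun i => by
      simp only [Function.comp_apply]
      exact Complex.zero_le_real.mpr (Real.sqrt_nonneg _))
    rw [hsU]
    exact hDpsd.mul_mul_conjTranspose_same U
  · conv_rhs => rw [hA.1.spectral_theorem, Unitary.conjStarAlgAut_apply]
    calc U * D * (star hA.1.eigenvectorUnitary : Matrix (Fin n) (Fin n) ℂ) *
          (U * D * (star hA.1.eigenvectorUnitary : Matrix (Fin n) (Fin n) ℂ))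
        = U * (D * ((star hA.1.eigenvectorUnitary : Matrix (Fin n) (Fin n) ℂ) * U) * D) *
          (star hA.1.eigenvectorUnitary : Matrix (Fin n) (Fin n) ℂ) := by
          simp only [Matrix.mul_assoc]
      _ = _ := by
          rw [hUU, Matrix.mul_one, hD, diagonal_mul_diagonal]
          congr 3
          funext i
          simp only [Function.comp_apply]
          rw [← Complex.ofReal_mul, Real.mul_self_sqrt (hA.eigenvalues_nonneg i)]
          rfl

private lemma sq_mul_eq_zero {n : ℕ} {S A : Matrix (Fin n) (Fin n) ℂ}
    (hS : Sᴴ = S) (h : S * S * A = 0) : S * A = 0 := by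
  have e : (S * A)ᴴ * (S * A) = Aᴴ * (S * S * A) := by
    rw [conjTranspose_mul, hS]
    simp only [Matrix.mul_assoc]
  exact conjTranspose_mul_self_eq_zero.mp (by rw [e, h, Matrix.mul_zero])

private lemma mul_sq_eq_zero {n : ℕ} {S A : Matrix (Fin n) (Fin n) ℂ}
    (hS : Sᴴ = S) (h : A * (S * S) = 0) : A * S = 0 := by
  have e : (A * S) * (A * S)ᴴ = A * (S * S) * Aᴴ := by
    rw [conjTranspose_mul, hS]
    simp only [Matrix.mul_assoc]
  exact self_mul_conjTranspose_eq_zero.mp (by rw [e, h, Matrix.zero_mul])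

/-- **Theorem 4 (failure probability of the constructed POVM).** Under the
hypotheses of the optimal-POVM construction, `Tr(E? ρ0) = α·F` and
`Tr(E? ρ1) = F/α`, so the failure probability is `η0·α·F + η1·F/α`. -/
theorem optimal_povm_failure_probability {n : ℕ}
    (ρ0 ρ1 V Eq : Matrix (Fin n) (Fin n) ℂ)
    (hρ0 : ρ0.PosSemidef) (hρ0tr : ρ0.trace = 1)
    (hρ1 : ρ1.PosSemidef) (hρ1tr : ρ1.trace = 1)
    (hrank : ρ0.rank + ρ1.rank = (ρ0 + ρ1).rank)
    (hfull : (ρ0 + ρ1).rank = n)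
    (hV : Vᴴ * V = 1) (hV' : V * Vᴴ = 1)
    (hpolar : msqrt ρ0 * msqrt ρ1 = msqrt (msqrt ρ0 * ρ1 * msqrt ρ0) * V)
    (α : ℝ) (hα : 0 < α)
    (hpos0 : (ρ0 - (α : ℂ) • msqrt (msqrt ρ0 * ρ1 * msqrt ρ0)).PosSemidef)
    (hpos1 : (ρ1 - (α : ℂ)⁻¹ • msqrt (msqrt ρ1 * ρ0 * msqrt ρ1)).PosSemidef)
    (hEq : Eq = (ρ0 + ρ1)⁻¹ *
      ((Real.sqrt α : ℂ) • msqrt ρ0 + (Real.sqrt α : ℂ)⁻¹ • (msqrt ρ1 * Vᴴ)) *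
      msqrt (msqrt ρ0 * ρ1 * msqrt ρ0) *
      ((Real.sqrt α : ℂ) • msqrt ρ0 + (Real.sqrt α : ℂ)⁻¹ • (V * msqrt ρ1)) *
      (ρ0 + ρ1)⁻¹)
    (η0 η1 : ℝ) :
    (Eq * ρ0).trace.re = α * (msqrt (msqrt ρ0 * ρ1 * msqrt ρ0)).trace.re ∧
      (Eq * ρ1).trace.re = (msqrt (msqrt ρ0 * ρ1 * msqrt ρ0)).trace.re / α ∧
      η0 * (Eq * ρ0).trace.re + η1 * (Eq * ρ1).trace.re =
        η0 * (α * (msqrt (msqrt ρ0 * ρ1 * msqrt ρ0)).trace.re) +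
          η1 * ((msqrt (msqrt ρ0 * ρ1 * msqrt ρ0)).trace.re / α) := by
  classical
  set S0 : Matrix (Fin n) (Fin n) ℂ := msqrt ρ0 with hS0def
  set S1 : Matrix (Fin n) (Fin n) ℂ := msqrt ρ1 with hS1def
  set F0 : Matrix (Fin n) (Fin n) ℂ := msqrt (S0 * ρ1 * S0) with hF0def
  set Sg : Matrix (Fin n) (Fin n) ℂ := ρ0 + ρ1 with hSgdef
  -- basic facts about the square roots
  have hS0psd : S0.PosSemidef := (msqrt_spec hρ0).1
  have hS1psd : S1.PosSemidef := (msqrt_spec hρ1).1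
  have hS0h : S0ᴴ = S0 := hS0psd.1
  have hS1h : S1ᴴ = S1 := hS1psd.1
  have hS0sq : S0 * S0 = ρ0 := (msqrt_spec hρ0).2
  have hS1sq : S1 * S1 = ρ1 := (msqrt_spec hρ1).2
  have hF0psd' : (S0 * ρ1 * S0).PosSemidef := by
    have h := hρ1.mul_mul_conjTranspose_same S0
    rwa [hS0h] at h
  have hF0psd : F0.PosSemidef := (msqrt_spec hF0psd').1
  have hF0h : F0ᴴ = F0 := hF0psd.1
  have hF0sq : F0 * F0 = S0 * ρ1 * S0 := (msqrt_spec hF0psd').2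
  -- Σ is invertible
  have hSgh : Sgᴴ = Sg := hρ0.1.add hρ1.1
  have hrange : LinearMap.range Sg.mulVecLin = ⊤ := by
    apply Submodule.eq_top_of_finrank_eq
    rw [show Module.finrank ℂ (LinearMap.range Sg.mulVecLin) = Sg.rank from rfl, hfull,
      Module.finrank_fintype_fun_eq_card, Fintype.card_fin]
  have hunit : IsUnit Sg := by
    rw [← mulVec_surjective_iff_isUnit]
    intro v
    have hv : v ∈ LinearMap.range Sg.mulVecLin := hrange ▸ Submodule.mem_top
    obtain ⟨x, hx⟩ := hv
    exact ⟨x, hx⟩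
  have hdet : IsUnit Sg.det := (Matrix.isUnit_iff_isUnit_det _).mp hunit
  have hSg1 : Sg * Sg⁻¹ = 1 := Matrix.mul_nonsing_inv _ hdet
  have hSg1' : Sg⁻¹ * Sg = 1 := Matrix.nonsing_inv_mul _ hdet
  have hSgih : Sg⁻¹ᴴ = Sg⁻¹ := by rw [Matrix.conjTranspose_nonsing_inv, hSgh]
  -- the key rank lemma: ρ0 Σ⁻¹ ρ1 = 0
  have hinf : LinearMap.range ρ0.mulVecLin ⊓ LinearMap.range ρ1.mulVecLin = ⊥ := by
    set U := LinearMap.range ρ0.mulVecLin with hU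
    set W := LinearMap.range ρ1.mulVecLin with hW
    have hsup : U ⊔ W = ⊤ := by
      rw [eq_top_iff, ← hrange]
      rintro _ ⟨x, rfl⟩
      rw [mulVecLin_apply, hSgdef, add_mulVec]
      exact Submodule.add_mem_sup ⟨x, rfl⟩ ⟨x, rfl⟩
    have h1 := Submodule.finrank_sup_add_finrank_inf_eq U W
    rw [hsup] at h1
    have h2 : Module.finrank ℂ U + Module.finrank ℂ W = n := by
      rw [show Module.finrank ℂ U = ρ0.rank from rfl, show Module.finrank ℂ W = ρ1.rank from rfl,
        hrank, hfull]
    have h3 : Module.finrank ℂ (⊤ : Submodule ℂ (Fin n → ℂ)) = n := by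
      rw [finrank_top, Module.finrank_fintype_fun_eq_card, Fintype.card_fin]
    rw [h3, h2] at h1
    have h4 : Module.finrank ℂ ↥(U ⊓ W) = 0 := by omega
    exact Submodule.finrank_eq_zero.mp h4
  have key : ρ0 * (Sg⁻¹ * ρ1) = 0 := by
    have hv : ∀ x : Fin n → ℂ, (ρ0 * (Sg⁻¹ * ρ1)) *ᵥ x = 0 := by
      intro x
      set y : Fin n → ℂ := (Sg⁻¹ * ρ1) *ᵥ x with hy
      have hSgy : Sg *ᵥ y = ρ1 *ᵥ x := by
        rw [hy, mulVec_mulVec, ← Matrix.mul_assoc, hSg1, Matrix.one_mul]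
      have hmem : ρ0 *ᵥ y ∈ LinearMap.range ρ0.mulVecLin ⊓ LinearMap.range ρ1.mulVecLin := by
        constructor
        · exact ⟨y, rfl⟩
        · refine ⟨x - y, ?_⟩
          have hh : ρ0 *ᵥ y + ρ1 *ᵥ y = ρ1 *ᵥ x := by
            rw [← add_mulVec, ← hSgdef, hSgy]
          rw [mulVecLin_apply, mulVec_sub, ← hh]
          abel
      rw [hinf] at hmem
      rw [← mulVec_mulVec]
      exact (Submodule.mem_bot ℂ).mp hmem
    ext i j
    have h := congrFun (hv (Pi.single j 1)) i
    rw [mulVec_single] at h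
    simpa using h
  have key' : ρ1 * (Sg⁻¹ * ρ0) = 0 := by
    have h := congrArg conjTranspose key
    simpa [conjTranspose_mul, hSgih, hρ0.1.eq, hρ1.1.eq, Matrix.mul_assoc] using h
  -- derived identities
  have k1 : S0 * (Sg⁻¹ * ρ1) = 0 := by
    apply sq_mul_eq_zero hS0h
    rw [hS0sq]
    exact key
  have k2 : S1 * (Sg⁻¹ * ρ0) = 0 := by
    apply sq_mul_eq_zero hS1h
    rw [hS1sq]
    exact key'
  have k3 : S1 * Sg⁻¹ * S0 = 0 := by
    apply mul_sq_eq_zero hS0h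
    rw [hS0sq, Matrix.mul_assoc]
    exact k2
  have k4 : S0 * Sg⁻¹ * S1 = 0 := by
    have h := congrArg conjTranspose k3
    simpa [conjTranspose_mul, hSgih, hS0h, hS1h, Matrix.mul_assoc] using h
  have k5 : S0 * (Sg⁻¹ * ρ0) = S0 := by
    have h : S0 * (Sg⁻¹ * ρ0) + S0 * (Sg⁻¹ * ρ1) = S0 := by
      rw [← Matrix.mul_add, ← Matrix.mul_add, ← hSgdef, hSg1', Matrix.mul_one]
    rwa [k1, add_zero] at h
  have k6 : S1 * (Sg⁻¹ * ρ1) = S1 := by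
    have h : S1 * (Sg⁻¹ * ρ0) + S1 * (Sg⁻¹ * ρ1) = S1 := by
      rw [← Matrix.mul_add, ← Matrix.mul_add, ← hSgdef, hSg1', Matrix.mul_one]
    rwa [k2, zero_add] at h
  -- the projection P = S0 Σ⁻¹ S0 fixes F0
  set P : Matrix (Fin n) (Fin n) ℂ := S0 * Sg⁻¹ * S0 with hPdef
  have hPS0 : P * S0 = S0 := by
    calc P * S0 = S0 * (Sg⁻¹ * (S0 * S0)) := by simp only [hPdef, Matrix.mul_assoc]
      _ = S0 := by rw [hS0sq]; exact k5
  have hPh : Pᴴ = P := by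
    rw [hPdef, conjTranspose_mul, conjTranspose_mul, hS0h, hSgih, Matrix.mul_assoc]
  have e1 : (1 - P) * (S0 * ρ1 * S0) = 0 := by
    rw [Matrix.sub_mul, Matrix.one_mul,
      show P * (S0 * ρ1 * S0) = P * S0 * (ρ1 * S0) from by simp only [Matrix.mul_assoc], hPS0]
    simp only [Matrix.mul_assoc, sub_self]
  have hz : ((1 - P) * F0) * ((1 - P) * F0)ᴴ = 0 := by
    rw [conjTranspose_mul, hF0h, conjTranspose_sub, conjTranspose_one, hPh]
    calc (1 - P) * F0 * (F0 * (1 - P)) = (1 - P) * (F0 * F0) * (1 - P) := by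
          simp only [Matrix.mul_assoc]
      _ = 0 := by rw [hF0sq, e1, Matrix.zero_mul]
  have hz2 : (1 - P) * F0 = 0 := self_mul_conjTranspose_eq_zero.mp hz
  have hPF0 : P * F0 = F0 := by
    rw [Matrix.sub_mul, Matrix.one_mul, sub_eq_zero] at hz2
    exact hz2.symm
  -- scalar facts
  set s : ℂ := (Real.sqrt α : ℂ) with hsdef
  have hs2 : s * s = (α : ℂ) := by
    rw [hsdef, ← Complex.ofReal_mul, Real.mul_self_sqrt hα.le]
  set M' : Matrix (Fin n) (Fin n) ℂ := s • S0 + s⁻¹ • (S1 * Vᴴ) with hM'def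
  set N' : Matrix (Fin n) (Fin n) ℂ := s • S0 + s⁻¹ • (V * S1) with hN'def
  have hVF0 : Vᴴ * F0 = S1 * S0 := by
    have h := congrArg conjTranspose hpolar
    simpa [conjTranspose_mul, hS0h, hS1h, hF0h] using h.symm
  have hA0 : N' * (Sg⁻¹ * ρ0) = s • S0 := by
    rw [hN'def, Matrix.add_mul, Matrix.smul_mul, Matrix.smul_mul, Matrix.mul_assoc V, k2,
      Matrix.mul_zero, smul_zero, add_zero, k5]
  have hA1 : N' * (Sg⁻¹ * ρ1) = s⁻¹ • (V * S1) := by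
    rw [hN'def, Matrix.add_mul, Matrix.smul_mul, Matrix.smul_mul, Matrix.mul_assoc V, k6,
      k1, smul_zero, zero_add]
  have hB0 : S0 * Sg⁻¹ * M' = s • P := by
    rw [hM'def, Matrix.mul_add, Matrix.mul_smul, Matrix.mul_smul, ← Matrix.mul_assoc, k4,
      Matrix.zero_mul, smul_zero, add_zero, hPdef]
  have hB1 : S1 * Sg⁻¹ * M' = s⁻¹ • (S1 * Sg⁻¹ * S1 * Vᴴ) := by
    rw [hM'def, Matrix.mul_add, Matrix.mul_smul, Matrix.mul_smul, k3, smul_zero, zero_add,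
      ← Matrix.mul_assoc]
  -- trace against ρ0
  have hTr0 : (Eq * ρ0).trace = (α : ℂ) * F0.trace := by
    have hstep : Eq * ρ0 = s • (Sg⁻¹ * M' * F0 * S0) := by
      rw [hEq]
      calc Sg⁻¹ * M' * F0 * N' * Sg⁻¹ * ρ0
          = Sg⁻¹ * M' * F0 * (N' * (Sg⁻¹ * ρ0)) := by simp only [Matrix.mul_assoc]
        _ = s • (Sg⁻¹ * M' * F0 * S0) := by rw [hA0, Matrix.mul_smul]
    rw [hstep, trace_smul, smul_eq_mul, trace_mul_cycle (Sg⁻¹ * M') F0 S0,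
      ← Matrix.mul_assoc S0 Sg⁻¹ M', hB0, Matrix.smul_mul, hPF0, trace_smul, smul_eq_mul,
      ← mul_assoc, hs2]
  -- trace against ρ1
  have hTr1 : (Eq * ρ1).trace = (α : ℂ)⁻¹ * F0.trace := by
    have hstep : Eq * ρ1 = s⁻¹ • (Sg⁻¹ * M' * F0 * (V * S1)) := by
      rw [hEq]
      calc Sg⁻¹ * M' * F0 * N' * Sg⁻¹ * ρ1
          = Sg⁻¹ * M' * F0 * (N' * (Sg⁻¹ * ρ1)) := by simp only [Matrix.mul_assoc]
        _ = s⁻¹ • (Sg⁻¹ * M' * F0 * (V * S1)) := by rw [hA1, Matrix.mul_smul]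
    have hQ : S1 * Sg⁻¹ * S1 * Vᴴ * F0 * V = Vᴴ * F0 * V := by
      calc S1 * Sg⁻¹ * S1 * Vᴴ * F0 * V
          = S1 * (Sg⁻¹ * (S1 * S1)) * S0 * V := by
            rw [Matrix.mul_assoc (S1 * Sg⁻¹ * S1) Vᴴ F0, hVF0]
            simp only [Matrix.mul_assoc]
        _ = S1 * (Sg⁻¹ * ρ1) * S0 * V := by rw [hS1sq]
        _ = S1 * S0 * V := by rw [k6]
        _ = Vᴴ * F0 * V := by rw [hVF0]
    have ht : (Sg⁻¹ * M' * F0 * (V * S1)).trace = s⁻¹ * F0.trace := by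
      rw [← Matrix.mul_assoc _ V S1, trace_mul_cycle (Sg⁻¹ * M' * F0) V S1,
        show S1 * (Sg⁻¹ * M' * F0) = S1 * Sg⁻¹ * M' * F0 from by simp only [Matrix.mul_assoc],
        hB1, Matrix.smul_mul, Matrix.smul_mul, trace_smul, smul_eq_mul, hQ,
        trace_mul_cycle Vᴴ F0 V, hV', Matrix.one_mul]
    rw [hstep, trace_smul, smul_eq_mul, ht, ← mul_assoc, ← mul_inv, hs2]
  -- conclude
  have r0 : (Eq * ρ0).trace.re = α * F0.trace.re := by
    rw [hTr0, Complex.re_ofReal_mul]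
  have r1 : (Eq * ρ1).trace.re = F0.trace.re / α := by
    rw [hTr1, ← Complex.ofReal_inv, Complex.re_ofReal_mul, inv_mul_eq_div]
  exact ⟨r0, r1, by rw [r0, r1]⟩
end
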